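/- Let δ ∈ (0, 10⁻⁵), x > 1, ϑ ∈ [1/2, 5/8], x^{2δ} ≤ N ≤ x^{1/3+δ}, r ≥ 3, 1 ≤ D ≤ x^{ϑ−2δ}, v := 2ϑ−1, u := (2−2ϑ)/3. Let d = p₁⋯p_r with primes p₁ ≥ ⋯ ≥ p_r and p₁⋯p_{j−1}p_j² ≤ D for all j ≤ r. Assume p₃ ≤ x^{u−v}, and assume either (p₁ ≤ x^v and p₂² ≤ x^{1−ϑ−2δ}) or (p₂ ≤ x^v and p₁² ≤ x^{1−ϑ−2δ}). Then there is a factorization d = d₁d₂d₃ into positive integers with d₁ ≤ N x^{−δ}, N² d₂ d₃² ≤ x^{1−δ}, and N² d₂⁵ d₃² ≤ x^{2−δ}. -/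

import Mathlib

open scoped BigOperators

private lemma rpow_add_helper {x : ℝ} (hx : 0 < x) (s t u : ℝ) (h : s + t = u) :
    x ^ s * x ^ t = x ^ u := by rw [← Real.rpow_add hx, h]

private lemma rpow_pow_helper {x : ℝ} (hx : 0 < x) (s : ℝ) (n : ℕ) (t : ℝ) (h : s * n = t) :
    (x ^ s) ^ n = x ^ t := by rw [← Real.rpow_natCast (x ^ s) n, ← Real.rpow_mul hx.le, h]

/-- Three-factor greedy algorithm: with `0 < δ < 10⁻⁵`, `ϑ ∈ [1/2, 5/8]`,
`x^{2δ} ≤ N ≤ x^{1/3+δ}`, `r ≥ 3`, `1 ≤ D ≤ x^{ϑ−2δ}`, `v := 2ϑ−1`, `u := (2−2ϑ)/3`: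
if `d = p₁⋯p_r` (primes `p₁ ≥ ⋯ ≥ p_r`, `p₁⋯p_{j−1}p_j² ≤ D` for all `j ≤ r`),
`p₃ ≤ x^{u−v}`, and either (`p₁ ≤ x^v` and `p₂² ≤ x^{1−ϑ−2δ}`) or
(`p₂ ≤ x^v` and `p₁² ≤ x^{1−ϑ−2δ}`), then there is a factorization `d = d₁d₂d₃` with
`d₁ ≤ N x^{−δ}`, `N²d₂d₃² ≤ x^{1−δ}`, `N²d₂⁵d₃² ≤ x^{2−δ}`. -/
theorem three_factor_greedy (δ x ϑ N D : ℝ) (hδ : 0 < δ) (hδ' : δ < 1 / 100000)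
    (hx : 1 < x) (hϑ1 : 1 / 2 ≤ ϑ) (hϑ2 : ϑ ≤ 5 / 8)
    (hN1 : x ^ (2 * δ) ≤ N) (hN2 : N ≤ x ^ ((1 : ℝ) / 3 + δ))
    (hD1 : 1 ≤ D) (hD2 : D ≤ x ^ (ϑ - 2 * δ))
    (r : ℕ) (hr : 3 ≤ r) (p : Fin r → ℕ) (hp : ∀ i, (p i).Prime)
    (hmono : ∀ i j : Fin r, i ≤ j → p j ≤ p i)
    (hwell : ∀ j : Fin r,
      ((∏ i ∈ Finset.univ.filter (· < j), p i : ℕ) : ℝ) * (p j : ℝ) ^ 2 ≤ D)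
    (hp₃ : (p ⟨2, by omega⟩ : ℝ) ≤ x ^ ((2 - 2 * ϑ) / 3 - (2 * ϑ - 1)))
    (hcase :
      ((p ⟨0, by omega⟩ : ℝ) ≤ x ^ (2 * ϑ - 1) ∧
        (p ⟨1, by omega⟩ : ℝ) ^ 2 ≤ x ^ (1 - ϑ - 2 * δ)) ∨
      ((p ⟨1, by omega⟩ : ℝ) ≤ x ^ (2 * ϑ - 1) ∧
        (p ⟨0, by omega⟩ : ℝ) ^ 2 ≤ x ^ (1 - ϑ - 2 * δ))) :
    ∃ d₁ d₂ d₃ : ℕ, 0 < d₁ ∧ 0 < d₂ ∧ 0 < d₃ ∧ d₁ * d₂ * d₃ = ∏ i, p i ∧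
      (d₁ : ℝ) ≤ N * x ^ (-δ) ∧
      N ^ 2 * (d₂ : ℝ) * (d₃ : ℝ) ^ 2 ≤ x ^ (1 - δ) ∧
      N ^ 2 * (d₂ : ℝ) ^ 5 * (d₃ : ℝ) ^ 2 ≤ x ^ (2 - δ) := by
  classical
  have hx0 : (0:ℝ) < x := lt_trans one_pos hx
  have hx1 : (1:ℝ) ≤ x := le_of_lt hx
  have hxp : ∀ s : ℝ, 0 < x ^ s := fun s => Real.rpow_pos_of_pos hx0 s
  have hxle : ∀ {s t : ℝ}, s ≤ t → x ^ s ≤ x ^ t := fun {s t} h =>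
    Real.rpow_le_rpow_of_exponent_le hx1 h
  have hmulx : ∀ (s t u : ℝ), s + t = u → x ^ s * x ^ t = x ^ u := fun s t u h =>
    rpow_add_helper hx0 s t u h
  have hx1s : ∀ {s : ℝ}, 0 ≤ s → (1:ℝ) ≤ x ^ s := fun {s} h => by
    have := hxle h
    simpa [Real.rpow_zero] using this
  have hN0 : (0:ℝ) < N := lt_of_lt_of_le (hxp _) hN1
  have hA1 : (1:ℝ) ≤ N * x ^ (-δ) := by
    have h1 : x ^ (2*δ) * x ^ (-δ) ≤ N * x ^ (-δ) :=
      mul_le_mul_of_nonneg_right hN1 (hxp _).le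
    have h2 : x ^ (2*δ) * x ^ (-δ) = x ^ δ := hmulx _ _ _ (by ring)
    have h3 : (1:ℝ) ≤ x ^ δ := hx1s hδ.le
    calc (1:ℝ) ≤ x ^ δ := h3
      _ = x ^ (2*δ) * x ^ (-δ) := h2.symm
      _ ≤ N * x ^ (-δ) := h1
  have hNle : N ≤ x ^ (1 - ϑ - δ) := le_trans hN2 (hxle (by linarith))
  -- main invariant induction
  have main : ∀ j : ℕ, 2 ≤ j → j ≤ r →
      ∃ a b c : ℕ, 0 < a ∧ 0 < b ∧ 0 < c ∧
        (a * b * c = ∏ i ∈ Finset.univ.filter (fun i : Fin r => (i:ℕ) < j), p i) ∧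
        ((a:ℝ) ≤ N * x ^ (-δ)) ∧
        (((b:ℝ) ≤ x ^ (2*ϑ-1) ∧ N * (c:ℝ) ≤ x ^ (1-ϑ-δ)) ∨
         (x ^ (2*ϑ-1) < (b:ℝ) ∧ (b:ℝ) ≤ x ^ ((2-2*ϑ)/3) ∧
          N^2 * (b:ℝ) * (c:ℝ)^2 ≤ x ^ (1-δ) ∧
          N^2 * (b:ℝ)^5 * (c:ℝ)^2 ≤ x ^ (2-δ))) := by
    intro j hj2
    induction j, hj2 using Nat.le_induction with
    | base =>
      intro _hr2
      have h01 : (Finset.univ.filter (fun i : Fin r => (i:ℕ) < 2)) =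
          {(⟨0, by omega⟩ : Fin r), ⟨1, by omega⟩} := by
        ext i
        simp only [Finset.mem_filter, Finset.mem_univ, true_and, Finset.mem_insert,
          Finset.mem_singleton, Fin.ext_iff]
        omega
      have hne : (⟨0, by omega⟩ : Fin r) ≠ (⟨1, by omega⟩ : Fin r) := by
        simp [Fin.ext_iff]
      have hprod2 : (∏ i ∈ Finset.univ.filter (fun i : Fin r => (i:ℕ) < 2), p i)
          = p ⟨0, by omega⟩ * p ⟨1, by omega⟩ := by rw [h01, Finset.prod_pair hne]
      have build : ∀ s w : ℕ, 0 < s → 0 < w →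
          s * w = p ⟨0, by omega⟩ * p ⟨1, by omega⟩ →
          ((s:ℝ) ≤ x ^ (2*ϑ-1)) → ((w:ℝ)^2 ≤ x ^ (1-ϑ-2*δ)) →
          ∃ a b c : ℕ, 0 < a ∧ 0 < b ∧ 0 < c ∧
            (a * b * c = ∏ i ∈ Finset.univ.filter (fun i : Fin r => (i:ℕ) < 2), p i) ∧
            ((a:ℝ) ≤ N * x ^ (-δ)) ∧
            (((b:ℝ) ≤ x ^ (2*ϑ-1) ∧ N * (c:ℝ) ≤ x ^ (1-ϑ-δ)) ∨
             (x ^ (2*ϑ-1) < (b:ℝ) ∧ (b:ℝ) ≤ x ^ ((2-2*ϑ)/3) ∧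
              N^2 * (b:ℝ) * (c:ℝ)^2 ≤ x ^ (1-δ) ∧
              N^2 * (b:ℝ)^5 * (c:ℝ)^2 ≤ x ^ (2-δ))) := by
        intro s w hs0 hw0 hswprod hsv hw2
        by_cases hcw : N * (w:ℝ) ≤ x ^ (1-ϑ-δ)
        · refine ⟨1, s, w, one_pos, hs0, hw0, ?_, by simpa using hA1, Or.inl ⟨hsv, hcw⟩⟩
          rw [hprod2, ← hswprod]; ring
        · refine ⟨w, s, 1, hw0, hs0, one_pos, ?_, ?_, Or.inl ⟨hsv, by simpa using hNle⟩⟩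
          · rw [hprod2, ← hswprod]; ring
          · have hxlt : x ^ (1-ϑ-δ) < N * (w:ℝ) := not_le.mp hcw
            have hw0' : (0:ℝ) < (w:ℝ) := by exact_mod_cast hw0
            have s1 : (w:ℝ) * x ^ (1-ϑ-δ) < (w:ℝ) * (N * (w:ℝ)) :=
              mul_lt_mul_of_pos_left hxlt hw0'
            have s3 : N * (w:ℝ)^2 ≤ N * x ^ (1-ϑ-2*δ) :=
              mul_le_mul_of_nonneg_left hw2 hN0.le
            have s4 : N * x ^ (1-ϑ-2*δ) = (N * x ^ (-δ)) * x ^ (1-ϑ-δ) := by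
              have e : x ^ (-δ) * x ^ (1-ϑ-δ) = x ^ (1-ϑ-2*δ) := hmulx _ _ _ (by ring)
              rw [← e]; ring
            have key : (w:ℝ) * x ^ (1-ϑ-δ) < (N * x ^ (-δ)) * x ^ (1-ϑ-δ) := by
              calc (w:ℝ) * x ^ (1-ϑ-δ) < (w:ℝ) * (N * (w:ℝ)) := s1
                _ = N * (w:ℝ)^2 := by ring
                _ ≤ N * x ^ (1-ϑ-2*δ) := s3
                _ = (N * x ^ (-δ)) * x ^ (1-ϑ-δ) := s4
            exact le_of_lt (lt_of_mul_lt_mul_right key (hxp _).le)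
      rcases hcase with ⟨hs, hw⟩ | ⟨hs, hw⟩
      · exact build _ _ (hp _).pos (hp _).pos rfl hs hw
      · exact build _ _ (hp _).pos (hp _).pos (mul_comm _ _) hs hw
    | succ n hn ih =>
      intro hn1r
      obtain ⟨a, b, c, ha0, hb0, hc0, hprod, haA, hinv⟩ := ih (by omega)
      have hjr : n < r := by omega
      set jf : Fin r := ⟨n, hjr⟩ with hjf
      set q : ℕ := p jf with hqdef
      have hq2 : 2 ≤ q := (hp jf).two_le
      have hq0 : 0 < q := by omega
      have hq0' : (0:ℝ) < (q:ℝ) := by exact_mod_cast hq0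
      have ha0' : (0:ℝ) < (a:ℝ) := by exact_mod_cast ha0
      have hb0' : (0:ℝ) < (b:ℝ) := by exact_mod_cast hb0
      have hc0' : (0:ℝ) < (c:ℝ) := by exact_mod_cast hc0
      have hqle : (q:ℝ) ≤ x ^ ((2-2*ϑ)/3 - (2*ϑ-1)) := by
        have h2n : (⟨2, by omega⟩ : Fin r) ≤ jf := by
          simp only [Fin.le_def]; omega
        exact le_trans (Nat.cast_le.mpr (hmono _ _ h2n)) hp₃
      have hfil : Finset.univ.filter (fun i : Fin r => i < jf) =
          Finset.univ.filter (fun i : Fin r => (i:ℕ) < n) := by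
        ext i; simp only [Finset.mem_filter, Finset.mem_univ, true_and]; exact Fin.lt_def
      have hw' : (a:ℝ) * b * c * (q:ℝ)^2 ≤ D := by
        have h := hwell jf
        rw [show (Finset.univ.filter (· < jf)) =
            Finset.univ.filter (fun i : Fin r => (i:ℕ) < n) from hfil, ← hprod] at h
        push_cast at h
        linarith
      have hsucc : Finset.univ.filter (fun i : Fin r => (i:ℕ) < n+1) =
          insert jf (Finset.univ.filter (fun i : Fin r => (i:ℕ) < n)) := by
        ext i
        simp only [Finset.mem_filter, Finset.mem_univ, true_and, Finset.mem_insert, Fin.ext_iff]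
        have hv : ((⟨n, hjr⟩ : Fin r) : ℕ) = n := rfl
        omega
      have hjnot : jf ∉ Finset.univ.filter (fun i : Fin r => (i:ℕ) < n) := by simp [hjf]
      have hprodsucc : (∏ i ∈ Finset.univ.filter (fun i : Fin r => (i:ℕ) < n+1), p i)
          = q * (a*b*c) := by rw [hsucc, Finset.prod_insert hjnot, ← hprod]
      have hA0 : (0:ℝ) ≤ N * x ^ (-δ) := by positivity
      have hD4 : D^2 ≤ x ^ (2*ϑ-4*δ) := by
        have e4 : (x ^ (ϑ-2*δ))^2 = x ^ (2*ϑ-4*δ) := rpow_pow_helper hx0 _ 2 _ (by push_cast; ring)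
        calc D^2 ≤ (x ^ (ϑ-2*δ))^2 := pow_le_pow_left₀ (by linarith) hD2 2
          _ = x ^ (2*ϑ-4*δ) := e4
      rcases hinv with ⟨hbv, hcC⟩ | ⟨hbv, hbu, hb1, hb5⟩
      · -- phase 1
        by_cases h1 : ((a:ℝ) * q ≤ N * x ^ (-δ))
        · refine ⟨a*q, b, c, by positivity, hb0, hc0, ?_, by push_cast; linarith,
            Or.inl ⟨hbv, hcC⟩⟩
          rw [hprodsucc]; ring
        by_cases h2 : ((b:ℝ) * q ≤ x ^ (2*ϑ-1))
        · refine ⟨a, b*q, c, ha0, by positivity, hc0, ?_, haA,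
            Or.inl ⟨by push_cast; linarith, hcC⟩⟩
          rw [hprodsucc]; ring
        by_cases h3 : (N * ((c:ℝ) * q) ≤ x ^ (1-ϑ-δ))
        · refine ⟨a, b, c*q, ha0, hb0, by positivity, ?_, haA,
            Or.inl ⟨hbv, by push_cast; linarith⟩⟩
          rw [hprodsucc]; ring
        · -- transition to phase 2 with d₂ := b*q
          have hAlt : N * x ^ (-δ) < (a:ℝ) * q := not_le.mp h1
          have hvlt : x ^ (2*ϑ-1) < (b:ℝ) * q := not_le.mp h2
          have hbqu : (b:ℝ) * q ≤ x ^ ((2-2*ϑ)/3) := by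
            calc (b:ℝ) * q ≤ x ^ (2*ϑ-1) * x ^ ((2-2*ϑ)/3 - (2*ϑ-1)) :=
                mul_le_mul hbv hqle hq0'.le (hxp _).le
              _ = x ^ ((2-2*ϑ)/3) := hmulx _ _ _ (by ring)
          have goal1 : N^2 * ((b:ℝ)*q) * (c:ℝ)^2 ≤ x ^ (1-δ) := by
            have hK0 : (0:ℝ) < N^2 * x ^ (2*ϑ-1-2*δ) := by positivity
            have hKe : (N * x ^ (-δ))^2 * x ^ (2*ϑ-1) = N^2 * x ^ (2*ϑ-1-2*δ) := by
              have e : x ^ (-δ) * x ^ (-δ) = x ^ (-(2*δ)) := hmulx _ _ _ (by ring)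
              have e2 : x ^ (-(2*δ)) * x ^ (2*ϑ-1) = x ^ (2*ϑ-1-2*δ) := hmulx _ _ _ (by ring)
              calc (N * x ^ (-δ))^2 * x ^ (2*ϑ-1)
                  = N^2 * ((x ^ (-δ) * x ^ (-δ)) * x ^ (2*ϑ-1)) := by ring
                _ = N^2 * x ^ (2*ϑ-1-2*δ) := by rw [e, e2]
            refine le_of_mul_le_mul_right ?_ hK0
            calc N^2 * ((b:ℝ)*q) * (c:ℝ)^2 * (N^2 * x ^ (2*ϑ-1-2*δ))
                = N^2 * ((b:ℝ)*q) * (c:ℝ)^2 * ((N * x ^ (-δ))^2 * x ^ (2*ϑ-1)) := by rw [hKe]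
              _ ≤ N^2 * ((b:ℝ)*q) * (c:ℝ)^2 * (((a:ℝ)*q)^2 * ((b:ℝ)*q)) := by
                        refine mul_le_mul_of_nonneg_left ?_ (by positivity)
                        exact mul_le_mul (pow_le_pow_left₀ hA0 hAlt.le 2) hvlt.le (hxp _).le
                          (by positivity)
              _ = (N * ((a:ℝ)*b*c*(q:ℝ)^2))^2 := by ring
              _ ≤ (N * D)^2 := by
                        refine pow_le_pow_left₀ (by positivity) ?_ 2
                        exact mul_le_mul_of_nonneg_left hw' hN0.le
              _ = N^2 * D^2 := by ring
              _ ≤ N^2 * x ^ (2*ϑ-4*δ) := mul_le_mul_of_nonneg_left hD4 (by positivity)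
              _ ≤ x ^ (1-δ) * (N^2 * x ^ (2*ϑ-1-2*δ)) := by
                        have e2 : x ^ (1-δ) * x ^ (2*ϑ-1-2*δ) = x ^ (2*ϑ-3*δ) := hmulx _ _ _ (by ring)
                        have hle : x ^ (2*ϑ-4*δ) ≤ x ^ (2*ϑ-3*δ) := hxle (by linarith)
                        calc N^2 * x ^ (2*ϑ-4*δ) ≤ N^2 * x ^ (2*ϑ-3*δ) :=
                            mul_le_mul_of_nonneg_left hle (by positivity)
                          _ = x ^ (1-δ) * (N^2 * x ^ (2*ϑ-1-2*δ)) := by rw [← e2]; ring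
          have goal2 : N^2 * ((b:ℝ)*q)^5 * (c:ℝ)^2 ≤ x ^ (2-δ) := by
            have hK0 : (0:ℝ) < N^2 * x ^ (-(2*δ)) := by positivity
            refine le_of_mul_le_mul_right ?_ hK0
            have e : x ^ (-δ) * x ^ (-δ) = x ^ (-(2*δ)) := hmulx _ _ _ (by ring)
            have e3 : (x ^ ((2-2*ϑ)/3))^3 = x ^ (2-2*ϑ) := rpow_pow_helper hx0 _ 3 _ (by push_cast; ring)
            calc N^2 * ((b:ℝ)*q)^5 * (c:ℝ)^2 * (N^2 * x ^ (-(2*δ)))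
                = N^2 * ((b:ℝ)*q)^5 * (c:ℝ)^2 * (N * x ^ (-δ))^2 := by rw [← e]; ring
              _ ≤ N^2 * ((b:ℝ)*q)^5 * (c:ℝ)^2 * ((a:ℝ)*q)^2 :=
                  mul_le_mul_of_nonneg_left (pow_le_pow_left₀ hA0 hAlt.le 2) (by positivity)
              _ = (N * ((a:ℝ)*b*c*(q:ℝ)^2))^2 * ((b:ℝ)*q)^3 := by ring
              _ ≤ (N * D)^2 * (x ^ ((2-2*ϑ)/3))^3 := by
                        refine mul_le_mul ?_ (pow_le_pow_left₀ (by positivity) hbqu 3)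
                          (by positivity) (by positivity)
                        exact pow_le_pow_left₀ (by positivity)
                          (mul_le_mul_of_nonneg_left hw' hN0.le) 2
              _ = N^2 * (D^2 * x ^ (2-2*ϑ)) := by rw [e3]; ring
              _ ≤ N^2 * (x ^ (2*ϑ-4*δ) * x ^ (2-2*ϑ)) := by
                        refine mul_le_mul_of_nonneg_left ?_ (by positivity)
                        exact mul_le_mul_of_nonneg_right hD4 (hxp _).le
              _ = N^2 * x ^ (2-4*δ) := by rw [hmulx _ _ _ (by ring : (2*ϑ-4*δ) + (2-2*ϑ) = 2-4*δ)]
              _ ≤ x ^ (2-δ) * (N^2 * x ^ (-(2*δ))) := by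
                        have e2 : x ^ (2-δ) * x ^ (-(2*δ)) = x ^ (2-3*δ) := hmulx _ _ _ (by ring)
                        have hle : x ^ (2-4*δ) ≤ x ^ (2-3*δ) := hxle (by linarith)
                        calc N^2 * x ^ (2-4*δ) ≤ N^2 * x ^ (2-3*δ) :=
                            mul_le_mul_of_nonneg_left hle (by positivity)
                          _ = x ^ (2-δ) * (N^2 * x ^ (-(2*δ))) := by rw [← e2]; ring
          refine ⟨a, b*q, c, ha0, by positivity, hc0, ?_, haA,
            Or.inr ⟨by push_cast; linarith, by push_cast; linarith,
              by push_cast; linarith [goal1], by push_cast; linarith [goal2]⟩⟩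
          rw [hprodsucc]; ring
      · -- phase 2
        by_cases h1 : ((a:ℝ) * q ≤ N * x ^ (-δ))
        · refine ⟨a*q, b, c, by positivity, hb0, hc0, ?_, by push_cast; linarith,
            Or.inr ⟨hbv, hbu, hb1, hb5⟩⟩
          rw [hprodsucc]; ring
        by_cases h2 : (N^2 * (b:ℝ) * ((c:ℝ)*q)^2 ≤ x ^ (1-δ)) ∧
            (N^2 * (b:ℝ)^5 * ((c:ℝ)*q)^2 ≤ x ^ (2-δ))
        · refine ⟨a, b, c*q, ha0, hb0, by positivity, ?_, haA,
            Or.inr ⟨hbv, hbu, by push_cast; linarith [h2.1], by push_cast; linarith [h2.2]⟩⟩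
          rw [hprodsucc]; ring
        · exfalso
          have hAlt : N * x ^ (-δ) < (a:ℝ) * q := not_le.mp h1
          have hA0 : (0:ℝ) ≤ N * x ^ (-δ) := by positivity
          have hND : (N * ((a:ℝ)*b*c*(q:ℝ)^2))^2 ≤ N^2 * x ^ (2*ϑ-4*δ) := by
            calc (N * ((a:ℝ)*b*c*(q:ℝ)^2))^2 ≤ (N * D)^2 := by
                      refine pow_le_pow_left₀ (by positivity) ?_ 2
                      exact mul_le_mul_of_nonneg_left hw' hN0.le
              _ = N^2 * D^2 := by ring
              _ ≤ N^2 * x ^ (2*ϑ-4*δ) := mul_le_mul_of_nonneg_left hD4 (by positivity)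
          rcases not_and_or.mp h2 with h2a | h2b
          · -- case (I)
            have hc1 : x ^ (1-δ) < N^2 * (b:ℝ) * ((c:ℝ)*q)^2 := not_le.mp h2a
            have step : (N * x ^ (-δ))^2 * x ^ (2*ϑ-1) * x ^ (1-δ) <
                ((a:ℝ)*q)^2 * (b:ℝ) * (N^2 * (b:ℝ) * ((c:ℝ)*q)^2) := by
              have base : (N * x ^ (-δ))^2 * x ^ (2*ϑ-1) ≤ ((a:ℝ)*q)^2 * (b:ℝ) :=
                mul_le_mul (pow_le_pow_left₀ hA0 hAlt.le 2) hbv.le (hxp _).le (by positivity)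
              calc (N * x ^ (-δ))^2 * x ^ (2*ϑ-1) * x ^ (1-δ)
                  ≤ ((a:ℝ)*q)^2 * (b:ℝ) * x ^ (1-δ) :=
                    mul_le_mul_of_nonneg_right base (hxp _).le
                _ < ((a:ℝ)*q)^2 * (b:ℝ) * (N^2 * (b:ℝ) * ((c:ℝ)*q)^2) :=
                    mul_lt_mul_of_pos_left hc1 (by positivity)
            have hre : ((a:ℝ)*q)^2 * (b:ℝ) * (N^2 * (b:ℝ) * ((c:ℝ)*q)^2) =
                (N * ((a:ℝ)*b*c*(q:ℝ)^2))^2 := by ring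
            have hle2 : (N * x ^ (-δ))^2 * x ^ (2*ϑ-1) * x ^ (1-δ) = N^2 * x ^ (2*ϑ-3*δ) := by
              have e1 : x ^ (-δ) * x ^ (-δ) = x ^ (-(2*δ)) := hmulx _ _ _ (by ring)
              have e2 : x ^ (-(2*δ)) * x ^ (2*ϑ-1) = x ^ (2*ϑ-1-2*δ) := hmulx _ _ _ (by ring)
              have e3 : x ^ (2*ϑ-1-2*δ) * x ^ (1-δ) = x ^ (2*ϑ-3*δ) := hmulx _ _ _ (by ring)
              calc (N * x ^ (-δ))^2 * x ^ (2*ϑ-1) * x ^ (1-δ)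
                  = N^2 * ((x ^ (-δ) * x ^ (-δ)) * x ^ (2*ϑ-1) * x ^ (1-δ)) := by ring
                _ = N^2 * x ^ (2*ϑ-3*δ) := by rw [e1, e2, e3]
            have final : N^2 * x ^ (2*ϑ-3*δ) < N^2 * x ^ (2*ϑ-4*δ) := by
              calc N^2 * x ^ (2*ϑ-3*δ) = (N * x ^ (-δ))^2 * x ^ (2*ϑ-1) * x ^ (1-δ) := hle2.symm
                _ < (N * ((a:ℝ)*b*c*(q:ℝ)^2))^2 := by rw [← hre]; exact step
                _ ≤ N^2 * x ^ (2*ϑ-4*δ) := hND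
            have : x ^ (2*ϑ-3*δ) < x ^ (2*ϑ-4*δ) :=
              lt_of_mul_lt_mul_left final (by positivity)
            have : x ^ (2*ϑ-4*δ) ≤ x ^ (2*ϑ-3*δ) := hxle (by linarith)
            linarith
          · -- case (II)
            have hc1 : x ^ (2-δ) < N^2 * (b:ℝ)^5 * ((c:ℝ)*q)^2 := not_le.mp h2b
            have e3 : (x ^ ((2-2*ϑ)/3))^3 = x ^ (2-2*ϑ) := rpow_pow_helper hx0 _ 3 _ (by push_cast; ring)
            have step : (N * x ^ (-δ))^2 * x ^ (2-δ) <
                ((a:ℝ)*q)^2 * (N^2 * (b:ℝ)^5 * ((c:ℝ)*q)^2) := by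
              have base : (N * x ^ (-δ))^2 ≤ ((a:ℝ)*q)^2 := pow_le_pow_left₀ hA0 hAlt.le 2
              calc (N * x ^ (-δ))^2 * x ^ (2-δ) ≤ ((a:ℝ)*q)^2 * x ^ (2-δ) :=
                  mul_le_mul_of_nonneg_right base (hxp _).le
                _ < ((a:ℝ)*q)^2 * (N^2 * (b:ℝ)^5 * ((c:ℝ)*q)^2) :=
                    mul_lt_mul_of_pos_left hc1 (by positivity)
            have hre : ((a:ℝ)*q)^2 * (N^2 * (b:ℝ)^5 * ((c:ℝ)*q)^2) =
                (N * ((a:ℝ)*b*c*(q:ℝ)^2))^2 * (b:ℝ)^3 := by ring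
            have hub : (N * ((a:ℝ)*b*c*(q:ℝ)^2))^2 * (b:ℝ)^3 ≤
                N^2 * x ^ (2*ϑ-4*δ) * x ^ (2-2*ϑ) := by
              calc (N * ((a:ℝ)*b*c*(q:ℝ)^2))^2 * (b:ℝ)^3
                  ≤ (N^2 * x ^ (2*ϑ-4*δ)) * (x ^ ((2-2*ϑ)/3))^3 :=
                    mul_le_mul hND (pow_le_pow_left₀ hb0'.le hbu 3) (by positivity) (by positivity)
                _ = N^2 * x ^ (2*ϑ-4*δ) * x ^ (2-2*ϑ) := by rw [e3]
            have hle2 : (N * x ^ (-δ))^2 * x ^ (2-δ) = N^2 * x ^ (2-3*δ) := by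
              have e1 : x ^ (-δ) * x ^ (-δ) = x ^ (-(2*δ)) := hmulx _ _ _ (by ring)
              have e2 : x ^ (-(2*δ)) * x ^ (2-δ) = x ^ (2-3*δ) := hmulx _ _ _ (by ring)
              calc (N * x ^ (-δ))^2 * x ^ (2-δ)
                  = N^2 * ((x ^ (-δ) * x ^ (-δ)) * x ^ (2-δ)) := by ring
                _ = N^2 * x ^ (2-3*δ) := by rw [e1, e2]
            have hru : N^2 * x ^ (2*ϑ-4*δ) * x ^ (2-2*ϑ) = N^2 * x ^ (2-4*δ) := by
              have e : x ^ (2*ϑ-4*δ) * x ^ (2-2*ϑ) = x ^ (2-4*δ) := hmulx _ _ _ (by ring)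
              rw [mul_assoc, e]
            have final : N^2 * x ^ (2-3*δ) < N^2 * x ^ (2-4*δ) := by
              calc N^2 * x ^ (2-3*δ) = (N * x ^ (-δ))^2 * x ^ (2-δ) := hle2.symm
                _ < ((a:ℝ)*q)^2 * (N^2 * (b:ℝ)^5 * ((c:ℝ)*q)^2) := step
                _ = (N * ((a:ℝ)*b*c*(q:ℝ)^2))^2 * (b:ℝ)^3 := hre
                _ ≤ N^2 * x ^ (2*ϑ-4*δ) * x ^ (2-2*ϑ) := hub
                _ = N^2 * x ^ (2-4*δ) := hru
            have : x ^ (2-3*δ) < x ^ (2-4*δ) := lt_of_mul_lt_mul_left final (by positivity)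
            have : x ^ (2-4*δ) ≤ x ^ (2-3*δ) := hxle (by linarith)
            linarith
  -- assemble
  obtain ⟨a, b, c, ha0, hb0, hc0, hprod, haA, hinv⟩ := main r (by omega) le_rfl
  have hall : (Finset.univ.filter (fun i : Fin r => (i:ℕ) < r)) = Finset.univ := by
    ext i; simp [i.isLt]
  rw [hall] at hprod
  refine ⟨a, b, c, ha0, hb0, hc0, hprod, haA, ?_⟩
  rcases hinv with ⟨hbv, hcC⟩ | ⟨_, _, hb1, hb5⟩
  · have hc0' : (0:ℝ) ≤ (c:ℝ) := by positivity
    have hNc2 : (N * (c:ℝ))^2 ≤ (x ^ (1-ϑ-δ))^2 := pow_le_pow_left₀ (by positivity) hcC 2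
    have eC : (x ^ (1-ϑ-δ))^2 = x ^ (2-2*ϑ-2*δ) := rpow_pow_helper hx0 _ 2 _ (by push_cast; ring)
    constructor
    · calc N^2 * (b:ℝ) * (c:ℝ)^2 = (b:ℝ) * (N * (c:ℝ))^2 := by ring
        _ ≤ x ^ (2*ϑ-1) * x ^ (2-2*ϑ-2*δ) := by
                  rw [← eC]
                  exact mul_le_mul hbv hNc2 (by positivity) (hxp _).le
        _ = x ^ (1-2*δ) := hmulx _ _ _ (by ring)
        _ ≤ x ^ (1-δ) := hxle (by linarith)
    · have hb5' : (b:ℝ)^5 ≤ (x ^ (2*ϑ-1))^5 := pow_le_pow_left₀ (by positivity) hbv 5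
      have eB : (x ^ (2*ϑ-1))^5 = x ^ (10*ϑ-5) := rpow_pow_helper hx0 _ 5 _ (by push_cast; ring)
      calc N^2 * (b:ℝ)^5 * (c:ℝ)^2 = (b:ℝ)^5 * (N * (c:ℝ))^2 := by ring
        _ ≤ x ^ (10*ϑ-5) * x ^ (2-2*ϑ-2*δ) := by
                  rw [← eB, ← eC]
                  exact mul_le_mul hb5' hNc2 (by positivity) (by positivity)
        _ = x ^ (8*ϑ-3-2*δ) := hmulx _ _ _ (by ring)
        _ ≤ x ^ (2-δ) := hxle (by linarith)
  · exact ⟨hb1, hb5⟩
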